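/- Let T be a table with suppressed cell set E, and let e ∈ E. Then e is an invariant cell of T (i.e., every bounded feasible assignment of T assigns e the same value) if and only if the edge corresponding to e is not contained in any edge-simple traversable cycle of the suppressed graph H of T. -/

import Mathlib

/-- A two-dimensional table: values, lower/upper bounds, and a set of suppressed cells. -/
structure Table (R C : Type*) where
  val : R × C → ℝ
  lo : R × C → ℝ
  hi : R × C → ℝ
  sup : Set (R × C)
  lo_le : ∀ e, lo e ≤ val e
  le_hi : ∀ e, val e ≤ hi e
  lo_lt_hi : ∀ e, lo e < hi e

variable {R C : Type*}

/-- A bounded feasible assignment of a table. -/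
def BFA [Fintype R] [Fintype C] (T : Table R C) (x : R × C → ℝ) : Prop :=
  (∀ e, e ∉ T.sup → x e = T.val e) ∧
  (∀ e ∈ T.sup, T.lo e ≤ x e ∧ x e ≤ T.hi e) ∧
  (∀ i : R, ∑ j, x (i, j) = ∑ j, T.val (i, j)) ∧
  (∀ j : C, ∑ i, x (i, j) = ∑ i, T.val (i, j))

/-- One traversable step in the mixed graph with edge set `S`: the edge of a cell `e`
may be traversed from its row endpoint to its column endpoint iff `val e < hi e`,
and from its column endpoint to its row endpoint iff `lo e < val e`. -/
def MStep (T : Table R C) (S : Set (R × C)) (v w : R ⊕ C) : Prop :=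
  ∃ e ∈ S, (T.val e < T.hi e ∧ v = Sum.inl e.1 ∧ w = Sum.inr e.2) ∨
           (T.lo e < T.val e ∧ v = Sum.inr e.2 ∧ w = Sum.inl e.1)

/-- Reachability along traversable paths in the mixed graph with edge set `S`. -/
def MReach (T : Table R C) (S : Set (R × C)) : (R ⊕ C) → (R ⊕ C) → Prop :=
  Relation.ReflTransGen (MStep T S)

/-- Mutual reachability in the mixed graph with edge set `S`. -/
def MutReach (T : Table R C) (S : Set (R × C)) (v w : R ⊕ C) : Prop :=
  MReach T S v w ∧ MReach T S w v

/-- `D` is a strongly connected component of the mixed graph with edge set `S`: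
an equivalence class of mutual reachability. -/
def IsSCC (T : Table R C) (S : Set (R × C)) (D : Set (R ⊕ C)) : Prop :=
  ∃ v, D = {w | MutReach T S v w}

/-- Direction-blind adjacency via an edge in `S`. -/
def Adj (S : Set (R × C)) (v w : R ⊕ C) : Prop :=
  ∃ e ∈ S, (v = Sum.inl e.1 ∧ w = Sum.inr e.2) ∨ (v = Sum.inr e.2 ∧ w = Sum.inl e.1)

/-- Direction-blind connectivity via edges in `S`. -/
def Conn (S : Set (R × C)) : (R ⊕ C) → (R ⊕ C) → Prop :=
  Relation.ReflTransGen (Adj S)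

/-- `D` is a connected component of the (direction-blind) graph with edge set `S`. -/
def IsCC (S : Set (R × C)) (D : Set (R ⊕ C)) : Prop :=
  ∃ v, D = {w | Conn S v w}

/-- The edges of `S` with both endpoints in the vertex set `D`. -/
def EdgesIn (S : Set (R × C)) (D : Set (R ⊕ C)) : Set (R × C) :=
  {e | e ∈ S ∧ Sum.inl e.1 ∈ D ∧ Sum.inr e.2 ∈ D}

/-- All vertices of `D` are joined by direction-blind paths using edges in `S`. -/
def ConnectedOn (S : Set (R × C)) (D : Set (R ⊕ C)) : Prop :=
  ∀ v ∈ D, ∀ w ∈ D, Conn S v w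

/-- The edge of cell `e` lies on an edge-simple traversable cycle of the mixed graph
with edge set `T.sup`.  The cycle visits rows `r 0, …, r (k-1)` and columns
`c 0, …, c (k-1)`, traversing edge `(r t, c t)` from its row to its column
(which requires `val < hi`) and edge `(r (t+1), c t)` from its column to its row
(which requires `lo < val`); all `2k` edges are distinct. -/
def InTravCycle [Fintype R] [Fintype C] (T : Table R C) (e : R × C) : Prop :=
  ∃ (k : ℕ) (r : ℕ → R) (c : ℕ → C),
    0 < k ∧ r k = r 0 ∧
    (∀ t < k, (r t, c t) ∈ T.sup ∧ T.val (r t, c t) < T.hi (r t, c t) ∧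
      (r (t + 1), c t) ∈ T.sup ∧ T.lo (r (t + 1), c t) < T.val (r (t + 1), c t)) ∧
    (∀ s < k, ∀ t < k, s ≠ t → (r s, c s) ≠ (r t, c t)) ∧
    (∀ s < k, ∀ t < k, s ≠ t → (r (s + 1), c s) ≠ (r (t + 1), c t)) ∧
    (∀ s < k, ∀ t < k, (r s, c s) ≠ (r (t + 1), c t)) ∧
    (∃ t < k, e = (r t, c t) ∨ e = (r (t + 1), c t))

open Finset

lemma sum_shift {k : ℕ} (g : ℕ → ℝ) (h : g k = g 0) :
    ∑ t ∈ Finset.range k, g (t + 1) = ∑ t ∈ Finset.range k, g t := by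
  have h1 := Finset.sum_range_succ' g k
  have h2 := Finset.sum_range_succ g k
  linarith

lemma sum_ite_pair_right [Fintype C] [DecidableEq R] [DecidableEq C] (i a : R) (b : C) :
    ∑ j, (if (i, j) = (a, b) then (1:ℝ) else 0) = if i = a then 1 else 0 := by
  by_cases hia : i = a
  · subst hia
    simp only [Prod.mk.injEq, true_and, if_pos rfl]
    rw [Finset.sum_ite_eq' Finset.univ b (fun _ => (1:ℝ))]
    simp
  · simp only [Prod.mk.injEq, hia, false_and, if_false, if_neg hia]
    simp

lemma sum_ite_pair_left [Fintype R] [DecidableEq R] [DecidableEq C] (j : C) (a : R) (b : C) :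
    ∑ i, (if (i, j) = (a, b) then (1:ℝ) else 0) = if j = b then 1 else 0 := by
  by_cases hjb : j = b
  · subst hjb
    simp only [Prod.mk.injEq, and_true, if_pos rfl]
    rw [Finset.sum_ite_eq' Finset.univ a (fun _ => (1:ℝ))]
    simp
  · simp only [Prod.mk.injEq, hjb, and_false, if_false, if_neg hjb]
    simp


private lemma easy [Fintype R] [Fintype C] (T : Table R C) (e : R × C)
    (h : InTravCycle T e) : ∃ x, BFA T x ∧ x e ≠ T.val e := by
  classical
  obtain ⟨k, r, c, hk, hrk, hmem, hfd, hbd, hfb, t0, ht0, het⟩ := h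
  set g : ℕ → ℝ := fun t => min (T.hi (r t, c t) - T.val (r t, c t))
      (T.val (r (t+1), c t) - T.lo (r (t+1), c t)) with hg
  have hne : (Finset.range k).Nonempty := Finset.nonempty_range_iff.mpr hk.ne'
  set ε : ℝ := (Finset.range k).inf' hne g with hε
  have hεpos : 0 < ε := by
    rw [hε, Finset.lt_inf'_iff]
    intro t ht
    rw [Finset.mem_range] at ht
    obtain ⟨_, h1, _, h2⟩ := hmem t ht
    exact lt_min (by linarith) (by linarith)
  set F1 : R × C → ℝ := fun f => ∑ t ∈ Finset.range k, (if f = (r t, c t) then (1:ℝ) else 0) with hF1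
  set F2 : R × C → ℝ := fun f => ∑ t ∈ Finset.range k, (if f = (r (t+1), c t) then (1:ℝ) else 0) with hF2
  set x : R × C → ℝ := fun f => T.val f + ε * (F1 f - F2 f) with hx
  -- evaluation lemmas
  have hF1f : ∀ t, t < k → F1 (r t, c t) = 1 := by
    intro t ht
    rw [hF1]
    dsimp only
    rw [Finset.sum_eq_single_of_mem t (Finset.mem_range.mpr ht)]
    · exact if_pos rfl
    · intro b hb hbt
      exact if_neg (hfd t ht b (Finset.mem_range.mp hb) (Ne.symm hbt))
  have hF2f : ∀ t, t < k → F2 (r t, c t) = 0 := by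
    intro t ht
    refine Finset.sum_eq_zero (fun b hb => if_neg ?_)
    exact hfb t ht b (Finset.mem_range.mp hb)
  have hF1b : ∀ t, t < k → F1 (r (t+1), c t) = 0 := by
    intro t ht
    refine Finset.sum_eq_zero (fun b hb => if_neg ?_)
    exact fun hh => hfb b (Finset.mem_range.mp hb) t ht hh.symm
  have hF2b : ∀ t, t < k → F2 (r (t+1), c t) = 1 := by
    intro t ht
    rw [hF2]
    dsimp only
    rw [Finset.sum_eq_single_of_mem t (Finset.mem_range.mpr ht)]
    · exact if_pos rfl
    · intro b hb hbt
      exact if_neg (hbd t ht b (Finset.mem_range.mp hb) (Ne.symm hbt))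
  have hzero : ∀ f : R × C, (∀ t, t < k → f ≠ (r t, c t)) → (∀ t, t < k → f ≠ (r (t+1), c t)) →
      F1 f = 0 ∧ F2 f = 0 := by
    intro f h1 h2
    constructor
    · exact Finset.sum_eq_zero (fun b hb => if_neg (h1 b (Finset.mem_range.mp hb)))
    · exact Finset.sum_eq_zero (fun b hb => if_neg (h2 b (Finset.mem_range.mp hb)))
  refine ⟨x, ⟨?_, ?_, ?_, ?_⟩, ?_⟩
  · -- agrees off sup
    intro f hf
    have h1 : ∀ t, t < k → f ≠ (r t, c t) := by
      intro t ht hh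
      exact hf (hh ▸ (hmem t ht).1)
    have h2 : ∀ t, t < k → f ≠ (r (t+1), c t) := by
      intro t ht hh
      exact hf (hh ▸ (hmem t ht).2.2.1)
    obtain ⟨hz1, hz2⟩ := hzero f h1 h2
    rw [hx]; dsimp only; rw [hz1, hz2]; ring
  · -- bounds
    intro f hf
    rw [hx]; dsimp only
    by_cases he1 : ∃ t, t < k ∧ f = (r t, c t)
    · obtain ⟨t, ht, rfl⟩ := he1
      rw [hF1f t ht, hF2f t ht]
      have hεle : ε ≤ g t := Finset.inf'_le g (Finset.mem_range.mpr ht)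
      have hlo := T.lo_le (r t, c t)
      constructor
      · nlinarith
      · have : ε ≤ T.hi (r t, c t) - T.val (r t, c t) := le_trans hεle (min_le_left _ _)
        nlinarith
    · by_cases he2 : ∃ t, t < k ∧ f = (r (t+1), c t)
      · obtain ⟨t, ht, rfl⟩ := he2
        rw [hF1b t ht, hF2b t ht]
        have hεle : ε ≤ g t := Finset.inf'_le g (Finset.mem_range.mpr ht)
        have hhi := T.le_hi (r (t+1), c t)
        constructor
        · have : ε ≤ T.val (r (t+1), c t) - T.lo (r (t+1), c t) :=
            le_trans hεle (by rw [hg]; exact min_le_right _ _)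
          nlinarith
        · nlinarith
      · obtain ⟨hz1, hz2⟩ := hzero f
          (fun t ht hh => he1 ⟨t, ht, hh⟩) (fun t ht hh => he2 ⟨t, ht, hh⟩)
        rw [hz1, hz2]
        have h1 := T.lo_le f
        have h2 := T.le_hi f
        constructor <;> nlinarith
  · -- row sums
    intro i
    rw [hx]; dsimp only
    rw [Finset.sum_add_distrib]
    have hsum : ∑ j, ε * (F1 (i, j) - F2 (i, j)) = 0 := by
      rw [← Finset.mul_sum, Finset.sum_sub_distrib]
      have e1 : ∑ j, F1 (i, j) = ∑ t ∈ Finset.range k, (if i = r t then (1:ℝ) else 0) := by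
        rw [hF1]; dsimp only
        rw [Finset.sum_comm]
        exact Finset.sum_congr rfl (fun t _ => sum_ite_pair_right i (r t) (c t))
      have e2 : ∑ j, F2 (i, j) = ∑ t ∈ Finset.range k, (if i = r (t+1) then (1:ℝ) else 0) := by
        rw [hF2]; dsimp only
        rw [Finset.sum_comm]
        exact Finset.sum_congr rfl (fun t _ => sum_ite_pair_right i (r (t+1)) (c t))
      rw [e1, e2, sum_shift (fun t => if i = r t then (1:ℝ) else 0) (by simp only [hrk])]
      ring
    rw [hsum]; ring
  · -- column sums
    intro j
    rw [hx]; dsimp only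
    rw [Finset.sum_add_distrib]
    have hsum : ∑ i, ε * (F1 (i, j) - F2 (i, j)) = 0 := by
      rw [← Finset.mul_sum, Finset.sum_sub_distrib]
      have e1 : ∑ i, F1 (i, j) = ∑ t ∈ Finset.range k, (if j = c t then (1:ℝ) else 0) := by
        rw [hF1]; dsimp only
        rw [Finset.sum_comm]
        exact Finset.sum_congr rfl (fun t _ => sum_ite_pair_left j (r t) (c t))
      have e2 : ∑ i, F2 (i, j) = ∑ t ∈ Finset.range k, (if j = c t then (1:ℝ) else 0) := by
        rw [hF2]; dsimp only
        rw [Finset.sum_comm]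
        exact Finset.sum_congr rfl (fun t _ => sum_ite_pair_left j (r (t+1)) (c t))
      rw [e1, e2]
      ring
    rw [hsum]; ring
  · -- x e ≠ val e
    rw [hx]; dsimp only
    rcases het with rfl | rfl
    · rw [hF1f t0 ht0, hF2f t0 ht0]
      intro hh; nlinarith
    · rw [hF1b t0 ht0, hF2b t0 ht0]
      intro hh; nlinarith

section HardDirection


def dArc (d : R × C → ℝ) (v w : R ⊕ C) : Prop :=
  (∃ f : R × C, 0 < d f ∧ v = Sum.inl f.1 ∧ w = Sum.inr f.2) ∨
  (∃ f : R × C, d f < 0 ∧ v = Sum.inr f.2 ∧ w = Sum.inl f.1)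

def dPath (d : R × C → ℝ) (n : ℕ) (p : ℕ → R ⊕ C) : Prop :=
  ∀ t, t < n → dArc d (p t) (p (t + 1))

lemma dPath_splice (d : R × C → ℝ) {n : ℕ} {p : ℕ → R ⊕ C} (hp : dPath d n p)
    {a b : ℕ} (hab : a ≤ b) (hbn : b ≤ n) (heq : p a = p b) :
    ∃ q : ℕ → R ⊕ C, q 0 = p 0 ∧ q (n - (b - a)) = p n ∧ dPath d (n - (b - a)) q := by
  refine ⟨fun t => if t < a then p t else p (t + (b - a)), ?_, ?_, ?_⟩
  · dsimp only
    by_cases h0 : 0 < a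
    · rw [if_pos h0]
    · rw [if_neg h0]
      have ha : a = 0 := by omega
      subst ha
      rw [show 0 + (b - 0) = b from by omega, ← heq]
  · dsimp only
    rw [if_neg (by omega : ¬ (n - (b - a) < a))]
    congr 1
    omega
  · intro t ht
    dsimp only
    by_cases h1 : t + 1 < a
    · rw [if_pos (by omega), if_pos h1]
      exact hp t (lt_of_lt_of_le (show t < a by omega) (hab.trans hbn))
    · by_cases h2 : t < a
      · have ha : t + 1 = a := by omega
        rw [if_pos h2, if_neg h1]
        have hb : t + 1 + (b - a) = b := by omega
        rw [hb, ← heq, ← ha]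
        exact hp t (lt_of_lt_of_le (show t < a by omega) (hab.trans hbn))
      · rw [if_neg h2, if_neg (by omega : ¬ t + 1 < a)]
        rw [show t + 1 + (b - a) = (t + (b - a)) + 1 from by omega]
        exact hp (t + (b - a)) (by omega)

lemma dPath_extend (d : R × C → ℝ) {n : ℕ} {p : ℕ → R ⊕ C} (hp : dPath d n p)
    {w : R ⊕ C} (harc : dArc d (p n) w) :
    ∃ q : ℕ → R ⊕ C, q 0 = p 0 ∧ q (n + 1) = w ∧ dPath d (n + 1) q := by
  refine ⟨fun t => if t ≤ n then p t else w, by dsimp only; rw [if_pos (Nat.zero_le n)],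
    by dsimp only; rw [if_neg (by omega)], ?_⟩
  intro t ht
  dsimp only
  by_cases h1 : t + 1 ≤ n
  · rw [if_pos (by omega), if_pos h1]
    exact hp t (by omega)
  · have ht' : t = n := by omega
    subst ht'
    rw [if_pos (le_refl t), if_neg (by omega)]
    exact harc

lemma dArc_inr {d : R × C → ℝ} {v w : R ⊕ C} (h : dArc d v w) (j : C) (hv : v = Sum.inr j) :
    ∃ i : R, w = Sum.inl i ∧ d (i, j) < 0 := by
  rcases h with ⟨f, _, hv', _⟩ | ⟨f, hf, hv', hw⟩
  · rw [hv] at hv'; exact absurd hv' (by simp)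
  · refine ⟨f.1, hw, ?_⟩
    rw [hv] at hv'
    have h2 : f.2 = j := by injection hv'.symm
    subst h2
    simpa using hf

lemma dArc_inl {d : R × C → ℝ} {v w : R ⊕ C} (h : dArc d v w) (i : R) (hv : v = Sum.inl i) :
    ∃ j : C, w = Sum.inr j ∧ 0 < d (i, j) := by
  rcases h with ⟨f, hf, hv', hw⟩ | ⟨f, _, hv', _⟩
  · refine ⟨f.2, hw, ?_⟩
    rw [hv] at hv'
    have h2 : f.1 = i := by injection hv'.symm
    subst h2
    simpa using hf
  · rw [hv] at hv'; exact absurd hv' (by simp)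

lemma reach_iff [Fintype R] [Fintype C] (d : R × C → ℝ)
    (hrow : ∀ i, ∑ j, d (i, j) = 0) (hcol : ∀ j, ∑ i, d (i, j) = 0)
    (v0 : R ⊕ C) {i : R} {j : C} (hf : d (i, j) ≠ 0) :
    (∃ n p, p 0 = v0 ∧ p n = Sum.inl i ∧ dPath d n p) ↔
    (∃ n p, p 0 = v0 ∧ p n = Sum.inr j ∧ dPath d n p) := by
  classical
  set A : Set (R ⊕ C) := {v | ∃ n p, p 0 = v0 ∧ p n = v ∧ dPath d n p} with hA
  have hclosed : ∀ v ∈ A, ∀ w, dArc d v w → w ∈ A := by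
    rintro v ⟨n, p, hp0, hpn, hp⟩ w harc
    obtain ⟨q, hq0, hqn, hq⟩ := dPath_extend d hp (hpn ▸ harc)
    exact ⟨n + 1, q, hq0.trans hp0, hqn, hq⟩
  set S : Finset R := univ.filter (fun i' => Sum.inl i' ∈ A) with hS
  set Tc : Finset C := univ.filter (fun j' => Sum.inr j' ∈ A) with hT
  have hST : ∀ i' ∈ S, ∀ j', 0 < d (i', j') → j' ∈ Tc := by
    intro i' hi' j' hd
    have : Sum.inl i' ∈ A := (Finset.mem_filter.mp hi').2
    have := hclosed _ this (Sum.inr j') (Or.inl ⟨(i', j'), hd, rfl, rfl⟩)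
    exact Finset.mem_filter.mpr ⟨Finset.mem_univ _, this⟩
  have hTS : ∀ j' ∈ Tc, ∀ i', d (i', j') < 0 → i' ∈ S := by
    intro j' hj' i' hd
    have : Sum.inr j' ∈ A := (Finset.mem_filter.mp hj').2
    have := hclosed _ this (Sum.inl i') (Or.inr ⟨(i', j'), hd, rfl, rfl⟩)
    exact Finset.mem_filter.mpr ⟨Finset.mem_univ _, this⟩
  set M : ℝ := ∑ i' ∈ S, ∑ j' ∈ Tc, d (i', j') with hM
  have h1 : M + ∑ i' ∈ S, ∑ j' ∈ Tcᶜ, d (i', j') = 0 := by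
    rw [hM, ← Finset.sum_add_distrib]
    rw [Finset.sum_congr rfl (fun i' _ => Finset.sum_add_sum_compl Tc _)]
    exact Finset.sum_eq_zero (fun i' _ => hrow i')
  have h2 : M + ∑ j' ∈ Tc, ∑ i' ∈ Sᶜ, d (i', j') = 0 := by
    rw [hM, Finset.sum_comm, ← Finset.sum_add_distrib]
    rw [Finset.sum_congr rfl (fun j' _ => Finset.sum_add_sum_compl S _)]
    exact Finset.sum_eq_zero (fun j' _ => hcol j')
  have hcut1 : ∀ i' ∈ S, ∀ j' ∈ Tcᶜ, d (i', j') ≤ 0 := by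
    intro i' hi' j' hj'
    by_contra hpos
    exact (Finset.mem_compl.mp hj') (hST i' hi' j' (by linarith))
  have hcut2 : ∀ j' ∈ Tc, ∀ i' ∈ Sᶜ, 0 ≤ d (i', j') := by
    intro j' hj' i' hi'
    by_contra hneg
    exact (Finset.mem_compl.mp hi') (hTS j' hj' i' (by linarith))
  have hs1 : ∑ i' ∈ S, ∑ j' ∈ Tcᶜ, d (i', j') ≤ 0 :=
    Finset.sum_nonpos (fun i' hi' => Finset.sum_nonpos (fun j' hj' => hcut1 i' hi' j' hj'))
  have hs2 : 0 ≤ ∑ j' ∈ Tc, ∑ i' ∈ Sᶜ, d (i', j') :=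
    Finset.sum_nonneg (fun j' hj' => Finset.sum_nonneg (fun i' hi' => hcut2 j' hj' i' hi'))
  have hM0 : M = 0 := by linarith
  have hz1 : ∀ i' ∈ S, ∀ j' ∈ Tcᶜ, d (i', j') = 0 := by
    have hsum : ∑ p ∈ S ×ˢ Tcᶜ, d p = 0 := by
      rw [Finset.sum_product]; linarith
    intro i' hi' j' hj'
    have := (Finset.sum_eq_zero_iff_of_nonpos (fun p hp => by
      obtain ⟨hp1, hp2⟩ := Finset.mem_product.mp hp
      simpa using hcut1 p.1 hp1 p.2 hp2)).mp hsum (i', j')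
      (Finset.mem_product.mpr ⟨hi', hj'⟩)
    exact this
  have hz2 : ∀ j' ∈ Tc, ∀ i' ∈ Sᶜ, d (i', j') = 0 := by
    have hsum : ∑ p ∈ Tc ×ˢ Sᶜ, d (p.2, p.1) = 0 := by
      rw [Finset.sum_product]; linarith
    intro j' hj' i' hi'
    have := (Finset.sum_eq_zero_iff_of_nonneg (fun p hp => by
      obtain ⟨hp1, hp2⟩ := Finset.mem_product.mp hp
      exact hcut2 p.1 hp1 p.2 hp2)).mp hsum (j', i')
      (Finset.mem_product.mpr ⟨hj', hi'⟩)
    exact this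
  constructor
  · rintro hreach
    have hiS : i ∈ S := Finset.mem_filter.mpr ⟨Finset.mem_univ _, hreach⟩
    by_contra hjn
    have hjT : j ∈ Tcᶜ := Finset.mem_compl.mpr (fun hj => hjn ((Finset.mem_filter.mp hj).2))
    exact hf (hz1 i hiS j hjT)
  · rintro hreach
    have hjT : j ∈ Tc := Finset.mem_filter.mpr ⟨Finset.mem_univ _, hreach⟩
    by_contra hin
    have hiS : i ∈ Sᶜ := Finset.mem_compl.mpr (fun hi => hin ((Finset.mem_filter.mp hi).2))
    exact hf (hz2 j hjT i hiS)

lemma min_path (d : R × C → ℝ) {v0 w0 : R ⊕ C}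
    (hex : ∃ n, ∃ p : ℕ → R ⊕ C, p 0 = v0 ∧ p n = w0 ∧ dPath d n p) :
    ∃ n, ∃ p : ℕ → R ⊕ C, p 0 = v0 ∧ p n = w0 ∧ dPath d n p ∧
      ∀ a b, a ≤ b → b ≤ n → p a = p b → a = b := by
  classical
  obtain ⟨p, hp0, hpn, hp⟩ := Nat.find_spec hex
  refine ⟨Nat.find hex, p, hp0, hpn, hp, ?_⟩
  intro a b hab hbn heq
  by_contra hne
  have hlt : a < b := lt_of_le_of_ne hab hne
  obtain ⟨q, hq0, hqn, hq⟩ := dPath_splice d hp hab hbn heq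
  exact Nat.find_min hex (show Nat.find hex - (b - a) < Nat.find hex by omega)
    ⟨q, hq0.trans hp0, hqn.trans hpn, hq⟩

lemma parity_inr (d : R × C → ℝ) {n : ℕ} {p : ℕ → R ⊕ C} (hp : dPath d n p)
    {j0 : C} (h0 : p 0 = Sum.inr j0) :
    ∀ t, t ≤ n → ((Even t → ∃ j, p t = Sum.inr j) ∧ (¬ Even t → ∃ i, p t = Sum.inl i)) := by
  intro t
  induction t with
  | zero => exact fun _ => ⟨fun _ => ⟨j0, h0⟩, fun h => absurd Even.zero h⟩
  | succ t ih =>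
    intro ht
    have iht := ih (by omega)
    by_cases he : Even t
    · obtain ⟨j, hj⟩ := iht.1 he
      obtain ⟨i, hi, _⟩ := dArc_inr (hp t (by omega)) j hj
      refine ⟨fun h => absurd (Nat.even_add_one.mp h) (by simpa using he), fun _ => ⟨i, hi⟩⟩
    · obtain ⟨i, hi⟩ := iht.2 he
      obtain ⟨j, hj, _⟩ := dArc_inl (hp t (by omega)) i hi
      refine ⟨fun _ => ⟨j, hj⟩, fun h => absurd (Nat.even_add_one.mpr he) h⟩

lemma parity_inl (d : R × C → ℝ) {n : ℕ} {p : ℕ → R ⊕ C} (hp : dPath d n p)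
    {i0 : R} (h0 : p 0 = Sum.inl i0) :
    ∀ t, t ≤ n → ((Even t → ∃ i, p t = Sum.inl i) ∧ (¬ Even t → ∃ j, p t = Sum.inr j)) := by
  intro t
  induction t with
  | zero => exact fun _ => ⟨fun _ => ⟨i0, h0⟩, fun h => absurd Even.zero h⟩
  | succ t ih =>
    intro ht
    have iht := ih (by omega)
    by_cases he : Even t
    · obtain ⟨i, hi⟩ := iht.1 he
      obtain ⟨j, hj, _⟩ := dArc_inl (hp t (by omega)) i hi
      refine ⟨fun h => absurd (Nat.even_add_one.mp h) (by simpa using he), fun _ => ⟨j, hj⟩⟩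
    · obtain ⟨j, hj⟩ := iht.2 he
      obtain ⟨i, hi, _⟩ := dArc_inr (hp t (by omega)) j hj
      refine ⟨fun _ => ⟨i, hi⟩, fun h => absurd (Nat.even_add_one.mpr he) h⟩

lemma extract [Fintype R] [Fintype C] [Nonempty R] [Nonempty C]
    (T : Table R C) (d : R × C → ℝ)
    (hsup : ∀ f, d f ≠ 0 → f ∈ T.sup)
    (hposf : ∀ f, 0 < d f → T.val f < T.hi f)
    (hnegf : ∀ f, d f < 0 → T.lo f < T.val f)
    (hrow : ∀ i, ∑ j, d (i, j) = 0) (hcol : ∀ j, ∑ i, d (i, j) = 0)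
    (e : R × C) (hde : d e ≠ 0) : InTravCycle T e := by
  classical
  have hde' : d (e.1, e.2) ≠ 0 := by simpa using hde
  rcases hde.lt_or_gt with hneg | hpos
  · -- d e < 0 : find path from inl e.1 to inr e.2
    have htriv : ∃ n, ∃ p : ℕ → R ⊕ C, p 0 = Sum.inl e.1 ∧ p n = Sum.inl e.1 ∧ dPath d n p :=
      ⟨0, fun _ => Sum.inl e.1, rfl, rfl, fun t ht => absurd ht (by omega)⟩
    have hex := (reach_iff d hrow hcol (Sum.inl e.1) hde').mp htriv
    obtain ⟨n, p, hp0, hpn, hp, hinj⟩ := min_path d hex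
    have hpar := parity_inl d hp hp0
    have hnodd : ¬ Even n := by
      intro hev
      obtain ⟨i', hi'⟩ := (hpar n le_rfl).1 hev
      rw [hpn] at hi'; exact absurd hi' (by simp)
    obtain ⟨m, hm⟩ := Nat.not_even_iff_odd.mp hnodd
    set r' : ℕ → R := fun u => if u ≤ m then Sum.elim id (fun _ => Classical.arbitrary R) (p (2*u)) else e.1 with hr'
    set c' : ℕ → C := fun u => Sum.elim (fun _ => Classical.arbitrary C) id (p (2*u+1)) with hc'
    have hpr : ∀ u, u ≤ m → p (2*u) = Sum.inl (r' u) := by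
      intro u hu
      obtain ⟨i', hi'⟩ := (hpar (2*u) (by omega)).1 (even_two_mul u)
      simp only [hr', if_pos hu]
      rw [hi']; simp
    have hpc : ∀ u, u ≤ m → p (2*u+1) = Sum.inr (c' u) := by
      intro u hu
      obtain ⟨j', hj'⟩ := (hpar (2*u+1) (by omega)).2 (by rw [Nat.even_iff]; omega)
      simp only [hc']
      rw [hj']; simp
    have hr0 : r' 0 = e.1 := by
      simp only [hr', if_pos (Nat.zero_le m)]
      rw [show 2*0 = 0 from rfl, hp0]; simp
    have hrk : r' (m+1) = e.1 := by simp only [hr', if_neg (by omega : ¬ m+1 ≤ m)]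
    have hcm : c' m = e.2 := by
      simp only [hc']
      rw [show 2*m+1 = n from by omega, hpn]; simp
    have hforw : ∀ u, u ≤ m → 0 < d (r' u, c' u) := by
      intro u hu
      obtain ⟨j', hj', hd⟩ := dArc_inl (hp (2*u) (by omega)) (r' u) (hpr u hu)
      have : Sum.inr (c' u) = Sum.inr j' := (hpc u hu).symm.trans hj'
      have hj : c' u = j' := by injection this
      rwa [← hj] at hd
    have hback : ∀ u, u ≤ m → d (r' (u+1), c' u) < 0 := by
      intro u hu
      rcases Nat.lt_or_ge u m with hum | hum
      · obtain ⟨i', hi', hd⟩ := dArc_inr (hp (2*u+1) (by omega)) (c' u) (hpc u hu)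
        have h2 : p (2*(u+1)) = Sum.inl i' := by rw [show 2*(u+1) = 2*u+1+1 from by ring, hi']
        have : Sum.inl (r' (u+1)) = Sum.inl i' := (hpr (u+1) (by omega)).symm.trans h2
        have hi : r' (u+1) = i' := by injection this
        rwa [← hi] at hd
      · have hum' : u = m := by omega
        subst hum'
        rw [hrk, hcm]
        simpa using hneg
    have hcdist : ∀ u v, u ≤ m → v ≤ m → c' u = c' v → u = v := by
      intro u v hu hv hcc
      have h1 : p (2*u+1) = p (2*v+1) := by rw [hpc u hu, hpc v hv, hcc]
      rcases Nat.le_total u v with huv | huv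
      · have := hinj (2*u+1) (2*v+1) (by omega) (by omega) h1
        omega
      · have := hinj (2*v+1) (2*u+1) (by omega) (by omega) h1.symm
        omega
    refine ⟨m+1, r', c', by omega, by rw [hrk, hr0], ?_, ?_, ?_, ?_, ⟨m, by omega, Or.inr ?_⟩⟩
    · intro t ht
      have h1 := hforw t (by omega)
      have h2 := hback t (by omega)
      exact ⟨hsup _ (ne_of_gt h1), hposf _ h1, hsup _ (ne_of_lt h2), hnegf _ h2⟩
    · intro s hs t ht hst heq
      exact hst (hcdist s t (by omega) (by omega) (Prod.ext_iff.mp heq).2)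
    · intro s hs t ht hst heq
      exact hst (hcdist s t (by omega) (by omega) (Prod.ext_iff.mp heq).2)
    · intro s hs t ht heq
      have h1 := hforw s (by omega)
      have h2 := hback t (by omega)
      rw [heq] at h1; linarith
    · rw [hrk, hcm]
  · -- d e > 0 : find path from inr e.2 to inl e.1
    have htriv : ∃ n, ∃ p : ℕ → R ⊕ C, p 0 = Sum.inr e.2 ∧ p n = Sum.inr e.2 ∧ dPath d n p :=
      ⟨0, fun _ => Sum.inr e.2, rfl, rfl, fun t ht => absurd ht (by omega)⟩
    have hex := (reach_iff d hrow hcol (Sum.inr e.2) hde').mpr htriv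
    obtain ⟨n, p, hp0, hpn, hp, hinj⟩ := min_path d hex
    have hpar := parity_inr d hp hp0
    have hnodd : ¬ Even n := by
      intro hev
      obtain ⟨j', hj'⟩ := (hpar n le_rfl).1 hev
      rw [hpn] at hj'; exact absurd hj' (by simp)
    obtain ⟨m, hm⟩ := Nat.not_even_iff_odd.mp hnodd
    set c' : ℕ → C := fun u => Sum.elim (fun _ => Classical.arbitrary C) id (p (2*u)) with hc'
    set r' : ℕ → R := fun u => if u = 0 then e.1 else Sum.elim id (fun _ => Classical.arbitrary R) (p (2*u-1)) with hr'
    have hpc : ∀ u, u ≤ m → p (2*u) = Sum.inr (c' u) := by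
      intro u hu
      obtain ⟨j', hj'⟩ := (hpar (2*u) (by omega)).1 (even_two_mul u)
      simp only [hc']
      rw [hj']; simp
    have hpr : ∀ u, 1 ≤ u → u ≤ m+1 → p (2*u-1) = Sum.inl (r' u) := by
      intro u h1u hu
      obtain ⟨i', hi'⟩ := (hpar (2*u-1) (by omega)).2 (by rw [Nat.even_iff]; omega)
      simp only [hr', if_neg (by omega : ¬ u = 0)]
      rw [hi']; simp
    have hr0 : r' 0 = e.1 := by simp only [hr', if_pos rfl]
    have hrk : r' (m+1) = e.1 := by
      simp only [hr', if_neg (by omega : ¬ m+1 = 0)]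
      rw [show 2*(m+1)-1 = n from by omega, hpn]; simp
    have hc0 : c' 0 = e.2 := by
      simp only [hc']
      rw [show 2*0 = 0 from rfl, hp0]; simp
    have hforw : ∀ u, u ≤ m → 0 < d (r' u, c' u) := by
      intro u hu
      rcases Nat.eq_zero_or_pos u with h0 | h0
      · subst h0
        rw [hr0, hc0]
        simpa using hpos
      · obtain ⟨j', hj', hd⟩ := dArc_inl (hp (2*u-1) (by omega)) (r' u) (hpr u h0 (by omega))
        have h2 : p (2*u) = Sum.inr j' := by rw [show 2*u = 2*u-1+1 from by omega, hj']
        have : Sum.inr (c' u) = Sum.inr j' := (hpc u hu).symm.trans h2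
        have hj : c' u = j' := by injection this
        rwa [← hj] at hd
    have hback : ∀ u, u ≤ m → d (r' (u+1), c' u) < 0 := by
      intro u hu
      obtain ⟨i', hi', hd⟩ := dArc_inr (hp (2*u) (by omega)) (c' u) (hpc u hu)
      have h2 : p (2*(u+1)-1) = Sum.inl i' := by rw [show 2*(u+1)-1 = 2*u+1 from by omega, hi']
      have : Sum.inl (r' (u+1)) = Sum.inl i' := (hpr (u+1) (by omega) (by omega)).symm.trans h2
      have hi : r' (u+1) = i' := by injection this
      rwa [← hi] at hd
    have hcdist : ∀ u v, u ≤ m → v ≤ m → c' u = c' v → u = v := by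
      intro u v hu hv hcc
      have h1 : p (2*u) = p (2*v) := by rw [hpc u hu, hpc v hv, hcc]
      rcases Nat.le_total u v with huv | huv
      · have := hinj (2*u) (2*v) (by omega) (by omega) h1
        omega
      · have := hinj (2*v) (2*u) (by omega) (by omega) h1.symm
        omega
    refine ⟨m+1, r', c', by omega, by rw [hrk, hr0], ?_, ?_, ?_, ?_, ⟨0, by omega, Or.inl ?_⟩⟩
    · intro t ht
      have h1 := hforw t (by omega)
      have h2 := hback t (by omega)
      exact ⟨hsup _ (ne_of_gt h1), hposf _ h1, hsup _ (ne_of_lt h2), hnegf _ h2⟩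
    · intro s hs t ht hst heq
      exact hst (hcdist s t (by omega) (by omega) (Prod.ext_iff.mp heq).2)
    · intro s hs t ht hst heq
      exact hst (hcdist s t (by omega) (by omega) (Prod.ext_iff.mp heq).2)
    · intro s hs t ht heq
      have h1 := hforw s (by omega)
      have h2 := hback t (by omega)
      rw [heq] at h1; linarith
    · rw [hr0, hc0]

lemma hard_dir [Fintype R] [Fintype C] [Nonempty R] [Nonempty C]
    (T : Table R C) (e : R × C) (x : R × C → ℝ) (hx : BFA T x)
    (hne : x e ≠ T.val e) : InTravCycle T e := by
  classical
  obtain ⟨hx1, hx2, hx3, hx4⟩ := hx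
  set d : R × C → ℝ := fun f => x f - T.val f with hd
  have hsup : ∀ f, d f ≠ 0 → f ∈ T.sup := by
    intro f hf
    by_contra hns
    exact hf (by rw [hd]; dsimp only; rw [hx1 f hns]; ring)
  have hposf : ∀ f, 0 < d f → T.val f < T.hi f := by
    intro f hf
    have hm := (hx2 f (hsup f (ne_of_gt hf))).2
    rw [hd] at hf; dsimp only at hf
    linarith
  have hnegf : ∀ f, d f < 0 → T.lo f < T.val f := by
    intro f hf
    have hm := (hx2 f (hsup f (ne_of_lt hf))).1
    rw [hd] at hf; dsimp only at hf
    linarith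
  have hrow : ∀ i, ∑ j, d (i, j) = 0 := by
    intro i
    rw [hd]; dsimp only
    rw [Finset.sum_sub_distrib, hx3 i]; ring
  have hcol : ∀ j, ∑ i, d (i, j) = 0 := by
    intro j
    rw [hd]; dsimp only
    rw [Finset.sum_sub_distrib, hx4 j]; ring
  have hde : d e ≠ 0 := by rw [hd]; dsimp only; exact sub_ne_zero.mpr hne
  exact extract T d hsup hposf hnegf hrow hcol e hde

end HardDirection

/-- A suppressed cell is an invariant cell iff it is not contained in any
edge-simple traversable cycle of the suppressed graph. -/
theorem stmt0 [Fintype R] [Fintype C] [Nonempty R] [Nonempty C]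
    (T : Table R C) (e : R × C) (he : e ∈ T.sup) :
    (∀ x y, BFA T x → BFA T y → x e = y e) ↔ ¬ InTravCycle T e := by
  constructor
  · intro hinv hcyc
    obtain ⟨x, hx, hne⟩ := easy T e hcyc
    have hval : BFA T T.val :=
      ⟨fun _ _ => rfl, fun f _ => ⟨T.lo_le f, T.le_hi f⟩, fun _ => rfl, fun _ => rfl⟩
    exact hne (hinv x T.val hx hval)
  · intro hncyc x y hxx hyy
    by_contra hne
    by_cases h : x e = T.val e
    · exact hncyc (hard_dir T e y hyy (fun hy => hne (by rw [h, hy])))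
    · exact hncyc (hard_dir T e x hxx h)
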